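/- For every positive integer d and every positive integer t, |G_{d,t,L}| ≤ ⌊(d−1)/t⌋ · |B_{d,L}|. -/

import Mathlib

open Polynomial

noncomputable section

/-- The orbit of `j : ZMod N` under multiplication by `q`. -/
def qOrbit (N q : ℕ) (j : ZMod N) : Set (ZMod N) :=
  Set.range fun k : ℕ => (q : ZMod N) ^ k * j

/-- The set `L` of orbits of `ZMod N` under multiplication by `q`. -/
def orbitSet (N q : ℕ) : Set (Set (ZMod N)) :=
  {l | ∃ j : ZMod N, l = qOrbit N q j}

/-- `β ^ j` for a residue class `j`. -/
def bpow {E : Type*} [Monoid E] {N : ℕ} (β : E) (j : ZMod N) : E :=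
  β ^ j.val

/-- The check-matrix entry `h_{i l} = ∑_{j ∈ l} ρ(β^j) β^{i j}`, as an element of `E`. -/
def hEntry {F E : Type*} [CommSemiring F] [CommSemiring E] [Algebra F E] {N : ℕ}
    (β : E) (ρ : Polynomial F) (i : ℕ) (l : Set (ZMod N)) : E :=
  ∑ᶠ j ∈ l, Polynomial.aeval (bpow β j) ρ * bpow β j ^ i

/-- The code `C(ρ, t)` inside `F^L`. -/
def codeSet (F E : Type*) [Field F] [Field E] [Algebra F E] (N q : ℕ)
    (β : E) (ρ : Polynomial F) (t : ℕ) : Set (↥(orbitSet N q) → F) :=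
  {c | ∀ i < t, ∑ᶠ l : orbitSet N q,
    algebraMap F E (c l) * hEntry β ρ i (l : Set (ZMod N)) = 0}

open scoped Classical in
/-- `deg c = ∑_{l : c_l ≠ 0} |l|`. -/
def wdeg {F : Type*} [Zero F] {N q : ℕ} (c : ↥(orbitSet N q) → F) : ℕ :=
  ∑ᶠ l : orbitSet N q, if c l ≠ 0 then (l : Set (ZMod N)).ncard else 0

/-- The set `B_{d,L}` of words of degree `d`. -/
def Bset (F : Type*) [Field F] (N q d : ℕ) : Set (↥(orbitSet N q) → F) :=
  {r | wdeg r = d}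

/-- The set `G_{d,t,L}` of monic irreducible polynomials `g` of degree `t` over `F` having
no roots in `E` such that `C(g⁻¹, t)` contains a word of `B_{d,L}`. -/
def Gset (F E : Type*) [Field F] [Field E] [Algebra F E] (N q : ℕ) (β : E)
    (d t : ℕ) : Set (Polynomial F) :=
  {g | g.Monic ∧ Irreducible g ∧ g.natDegree = t ∧
    (∀ x : E, Polynomial.aeval x g ≠ 0) ∧
    ∃ ginv : Polynomial F, ginv.degree < (N : WithBot ℕ) ∧
      ((X : Polynomial F) ^ N - 1 ∣ g * ginv - 1) ∧
      ∃ r ∈ Bset F N q d, r ∈ codeSet F E N q β ginv t}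

section AuxProof
open scoped Classical

-- orbit lemmas
def orbitOf (N q : ℕ) (j : ZMod N) : ↥(orbitSet N q) := ⟨qOrbit N q j, ⟨j, rfl⟩⟩

lemma mem_qOrbit_self (N q : ℕ) (j : ZMod N) : j ∈ qOrbit N q j :=
  ⟨0, by simp⟩

lemma qOrbit_eq_of_mem {N q m : ℕ} (hqe : (q : ZMod N) ^ m = 1) (hm : 0 < m)
    {j j' : ZMod N} (h : j' ∈ qOrbit N q j) : qOrbit N q j' = qOrbit N q j := by
  obtain ⟨k, rfl⟩ := h
  ext x
  constructor
  · rintro ⟨k', rfl⟩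
    exact ⟨k' + k, by simp [pow_add, mul_assoc]⟩
  · rintro ⟨k', rfl⟩
    refine ⟨k' + k * (m - 1), ?_⟩
    have hk : k * (m - 1) + k = m * k := by
      obtain ⟨n, rfl⟩ := Nat.exists_eq_succ_of_ne_zero hm.ne'
      simp only [Nat.succ_sub_one, Nat.mul_succ, Nat.succ_mul]
      ring
    show (q : ZMod N) ^ (k' + k * (m - 1)) * ((q : ZMod N) ^ k * j) = (q : ZMod N) ^ k' * j
    rw [pow_add, mul_assoc, ← mul_assoc ((q:ZMod N)^(k*(m-1))), ← pow_add, hk,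
      pow_mul, hqe, one_pow, one_mul]

lemma orbitOf_eq_of_mem {N q m : ℕ} (hqe : (q : ZMod N) ^ m = 1) (hm : 0 < m)
    {l : ↥(orbitSet N q)} {j : ZMod N} (hj : j ∈ (l : Set (ZMod N))) :
    orbitOf N q j = l := by
  obtain ⟨j0, h0⟩ := l.2
  refine Subtype.ext ?_
  show qOrbit N q j = (l : Set (ZMod N))
  rw [h0] at hj ⊢
  exact qOrbit_eq_of_mem hqe hm hj

lemma filter_orbit_eq {N q m : ℕ} [NeZero N] (hqe : (q : ZMod N) ^ m = 1) (hm : 0 < m)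
    (l : ↥(orbitSet N q)) :
    Finset.univ.filter (fun j => orbitOf N q j = l) =
      (Set.toFinite (l : Set (ZMod N))).toFinset := by
  ext j
  simp only [Finset.mem_filter, Finset.mem_univ, true_and, Set.Finite.mem_toFinset]
  constructor
  · rintro rfl; exact mem_qOrbit_self N q j
  · exact fun hj => orbitOf_eq_of_mem hqe hm hj

variable {F E : Type*} [Field F] [Field E] [Algebra F E]

lemma syndrome_sum {N q m t : ℕ} [NeZero N] (hqe : (q : ZMod N) ^ m = 1) (hm : 0 < m)
    (β : E) (ρ : Polynomial F) (r : ↥(orbitSet N q) → F)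
    (hc : r ∈ codeSet F E N q β ρ t) {i : ℕ} (hi : i < t) :
    ∑ j : ZMod N, algebraMap F E (r (orbitOf N q j)) *
      (Polynomial.aeval (bpow β j) ρ * bpow β j ^ i) = 0 := by
  have h := hc i hi
  letI : Fintype ↥(orbitSet N q) := Fintype.ofFinite _
  rw [finsum_eq_sum_of_fintype] at h
  calc ∑ j : ZMod N, algebraMap F E (r (orbitOf N q j)) *
        (Polynomial.aeval (bpow β j) ρ * bpow β j ^ i)
      = ∑ l : ↥(orbitSet N q), ∑ j ∈ Finset.univ.filter (fun j => orbitOf N q j = l),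
          algebraMap F E (r (orbitOf N q j)) *
            (Polynomial.aeval (bpow β j) ρ * bpow β j ^ i) :=
        (Finset.sum_fiberwise _ _ _).symm
    _ = ∑ l : ↥(orbitSet N q), algebraMap F E (r l) * hEntry β ρ i (l : Set (ZMod N)) := by
        refine Finset.sum_congr rfl fun l _ => ?_
        have hE : hEntry β ρ i (l : Set (ZMod N)) =
            ∑ j ∈ (Set.toFinite (l : Set (ZMod N))).toFinset,
              Polynomial.aeval (bpow β j) ρ * bpow β j ^ i :=
          finsum_mem_eq_finite_toFinset_sum _ _
        rw [hE, Finset.mul_sum, filter_orbit_eq hqe hm l]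
        refine Finset.sum_congr rfl fun j hj => ?_
        rw [orbitOf_eq_of_mem hqe hm (Set.Finite.mem_toFinset _ |>.mp hj)]
    _ = 0 := h

lemma eval_ginv_one {N : ℕ} {β : E} (hβN : β ^ N = 1) {g ginv : Polynomial F}
    (hdvd : (X : Polynomial F) ^ N - 1 ∣ g * ginv - 1) (j : ZMod N) :
    Polynomial.aeval (bpow β j) g * Polynomial.aeval (bpow β j) ginv = 1 := by
  obtain ⟨k, hk⟩ := hdvd
  have := congrArg (Polynomial.aeval (bpow β j)) hk
  simp only [map_sub, map_mul, map_one, map_pow, Polynomial.aeval_X] at this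
  have hb : bpow β j ^ N = 1 := by
    rw [bpow, ← pow_mul, mul_comm, pow_mul, hβN, one_pow]
  rw [hb, sub_self, zero_mul, sub_eq_zero] at this
  exact this

lemma finite_monic_deg (t : ℕ) [Fintype F] :
    {p : Polynomial F | p.natDegree ≤ t}.Finite := by
  have : {p : Polynomial F | p.natDegree ≤ t} ⊆
      (fun v : Fin (t + 1) → F => ∑ i : Fin (t + 1), Polynomial.C (v i) * X ^ (i : ℕ)) ''
        Set.univ := by
    intro p hp
    refine ⟨fun i => p.coeff i, Set.mem_univ _, ?_⟩
    conv_rhs => rw [p.as_sum_range' (t + 1) (Nat.lt_succ_of_le hp)]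
    show ∑ i : Fin (t + 1), Polynomial.C (p.coeff (i : ℕ)) * X ^ (i : ℕ) =
      ∑ i ∈ Finset.range (t + 1), Polynomial.monomial i (p.coeff i)
    rw [Fin.sum_univ_eq_sum_range (fun i => Polynomial.C (p.coeff i) * X ^ i)]
    simp [Polynomial.C_mul_X_pow_eq_monomial]
  exact Set.Finite.subset (Set.finite_univ.image _) this

lemma key_dvd {ι : Type*} [DecidableEq ι] (S : Finset ι) (a : ι → E) (u : ι → F) (v : ι → E)
    (g : Polynomial F) (t : ℕ) (hg : g.natDegree = t)
    (hgv : ∀ j ∈ S, Polynomial.aeval (a j) g * v j = 1)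
    (hsyn : ∀ i < t, ∑ j ∈ S, algebraMap F E (u j) * (v j * a j ^ i) = 0) :
    g.map (algebraMap F E) ∣
      ∑ j ∈ S, Polynomial.C (algebraMap F E (u j)) *
        ∏ k ∈ S.erase j, ((X : Polynomial E) - Polynomial.C (a k)) := by
  set φ := algebraMap F E with hφ
  set gE := g.map φ with hgE
  have hdeg : gE.natDegree < t + 1 := by
    exact Nat.lt_succ_of_le (le_trans Polynomial.natDegree_map_le hg.le)
  set w : ι → E := fun j => φ (u j) * v j with hw
  set H : E → Polynomial E := fun x => ∑ s ∈ Finset.range (t + 1),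
    Polynomial.C (φ (g.coeff s)) *
      ∑ i ∈ Finset.range s, X ^ i * Polynomial.C x ^ (s - 1 - i) with hH
  have c1 : ∀ x : E, H x * (X - Polynomial.C x) =
      gE - Polynomial.C (Polynomial.aeval x g) := by
    intro x
    have e1 : gE = ∑ s ∈ Finset.range (t + 1), Polynomial.C (φ (g.coeff s)) * X ^ s := by
      conv_lhs => rw [gE.as_sum_range' (t + 1) hdeg]
      refine Finset.sum_congr rfl fun s _ => ?_
      rw [Polynomial.C_mul_X_pow_eq_monomial, Polynomial.coeff_map]
    have e2 : Polynomial.aeval x g =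
        ∑ s ∈ Finset.range (t + 1), φ (g.coeff s) * x ^ s := by
      rw [Polynomial.aeval_eq_sum_range' (show g.natDegree < t + 1 by omega)]
      exact Finset.sum_congr rfl fun s _ => Algebra.smul_def _ _
    rw [hH, Finset.sum_mul, e1, e2, map_sum, ← Finset.sum_sub_distrib]
    refine Finset.sum_congr rfl fun s _ => ?_
    rw [mul_assoc, geom_sum₂_mul, mul_sub, ← Polynomial.C_pow, ← map_mul]
  have c2 : ∑ j ∈ S, Polynomial.C (w j) * H (a j) = 0 := by
    calc ∑ j ∈ S, Polynomial.C (w j) * H (a j)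
        = ∑ j ∈ S, ∑ s ∈ Finset.range (t + 1), ∑ i ∈ Finset.range s,
            Polynomial.C (φ (g.coeff s)) * X ^ i *
              Polynomial.C (w j * a j ^ (s - 1 - i)) := by
          refine Finset.sum_congr rfl fun j _ => ?_
          rw [hH, Finset.mul_sum]
          refine Finset.sum_congr rfl fun s _ => ?_
          rw [Finset.mul_sum, Finset.mul_sum]
          refine Finset.sum_congr rfl fun i _ => ?_
          simp only [map_mul, map_pow]
          ring
      _ = ∑ s ∈ Finset.range (t + 1), ∑ i ∈ Finset.range s,
            Polynomial.C (φ (g.coeff s)) * X ^ i *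
              Polynomial.C (∑ j ∈ S, w j * a j ^ (s - 1 - i)) := by
          rw [Finset.sum_comm]
          refine Finset.sum_congr rfl fun s _ => ?_
          rw [Finset.sum_comm]
          refine Finset.sum_congr rfl fun i _ => ?_
          rw [← Finset.mul_sum, map_sum]
      _ = 0 := by
          refine Finset.sum_eq_zero fun s hs => Finset.sum_eq_zero fun i hi => ?_
          have h1 : s - 1 - i < t := by
            have := Finset.mem_range.mp hs
            have := Finset.mem_range.mp hi
            omega
          have h2 : ∑ j ∈ S, w j * a j ^ (s - 1 - i) = 0 := by
            rw [← hsyn _ h1]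
            exact Finset.sum_congr rfl fun j _ => by rw [hw]; ring
          rw [h2, map_zero, mul_zero]
  have main : gE * (∑ j ∈ S, Polynomial.C (w j) *
        ∏ k ∈ S.erase j, ((X : Polynomial E) - Polynomial.C (a k))) =
      (∑ j ∈ S, Polynomial.C (φ (u j)) *
        ∏ k ∈ S.erase j, ((X : Polynomial E) - Polynomial.C (a k))) +
      (∏ k ∈ S, ((X : Polynomial E) - Polynomial.C (a k))) *
        (∑ j ∈ S, Polynomial.C (w j) * H (a j)) := by
    rw [Finset.mul_sum, Finset.mul_sum, ← Finset.sum_add_distrib]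
    refine Finset.sum_congr rfl fun j hj => ?_
    have hprod : (∏ k ∈ S, ((X : Polynomial E) - Polynomial.C (a k))) =
        ((X : Polynomial E) - Polynomial.C (a j)) *
          ∏ k ∈ S.erase j, ((X : Polynomial E) - Polynomial.C (a k)) :=
      (Finset.mul_prod_erase S _ hj).symm
    have hCw : Polynomial.C (φ (u j)) =
        Polynomial.C (w j) * Polynomial.C (Polynomial.aeval (a j) g) := by
      rw [← map_mul]
      congr 1
      rw [hw]
      have := hgv j hj
      calc φ (u j) = φ (u j) * (Polynomial.aeval (a j) g * v j) := by rw [this, mul_one]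
        _ = φ (u j) * v j * Polynomial.aeval (a j) g := by ring
    have hc1 := c1 (a j)
    rw [hprod, hCw]
    linear_combination (-(Polynomial.C (w j) *
      ∏ k ∈ S.erase j, ((X : Polynomial E) - Polynomial.C (a k)))) * hc1
  rw [c2, mul_zero, add_zero] at main
  exact ⟨_, main.symm⟩

lemma Cr_natDegree_le {ι : Type*} [DecidableEq ι] (S : Finset ι) (a : ι → E) (c : ι → E) :
    (∑ j ∈ S, Polynomial.C (c j) *
      ∏ k ∈ S.erase j, ((X : Polynomial E) - Polynomial.C (a k))).natDegree ≤ S.card - 1 := by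
  refine Polynomial.natDegree_sum_le_of_forall_le _ _ fun j hj => ?_
  refine le_trans (Polynomial.natDegree_mul_le) ?_
  rw [Polynomial.natDegree_C, zero_add]
  rw [Polynomial.natDegree_prod_of_monic _ _ (fun k _ => Polynomial.monic_X_sub_C _)]
  simp [Polynomial.natDegree_X_sub_C, Finset.card_erase_of_mem hj]

lemma Cr_ne_zero {ι : Type*} [DecidableEq ι] (S : Finset ι) (a : ι → E) (c : ι → E)
    (hinj : Set.InjOn a S) {j0 : ι} (hj0 : j0 ∈ S) (hc0 : c j0 ≠ 0) :
    (∑ j ∈ S, Polynomial.C (c j) *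
      ∏ k ∈ S.erase j, ((X : Polynomial E) - Polynomial.C (a k))) ≠ 0 := by
  intro h
  have heval : Polynomial.eval (a j0) (∑ j ∈ S, Polynomial.C (c j) *
      ∏ k ∈ S.erase j, ((X : Polynomial E) - Polynomial.C (a k))) =
      c j0 * ∏ k ∈ S.erase j0, (a j0 - a k) := by
    rw [Polynomial.eval_finset_sum]
    rw [Finset.sum_eq_single j0]
    · simp [Polynomial.eval_prod]
    · intro j hj hne
      have hz : ∏ k ∈ S.erase j, (a j0 - a k) = 0 :=
        Finset.prod_eq_zero (Finset.mem_erase.mpr ⟨hne.symm, hj0⟩) (sub_self _)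
      simp [Polynomial.eval_prod, hz]
    · exact fun h' => absurd hj0 h'
  rw [h, Polynomial.eval_zero] at heval
  have hprod : ∏ k ∈ S.erase j0, (a j0 - a k) ≠ 0 := by
    rw [Finset.prod_ne_zero_iff]
    intro k hk
    rw [sub_ne_zero]
    intro hak
    exact (Finset.mem_erase.mp hk).1.symm
      (hinj hj0 (Finset.mem_of_mem_erase hk) hak)
  exact (mul_ne_zero hc0 hprod) heval.symm

lemma card_support_eq {N q m : ℕ} [NeZero N] (hqe : (q : ZMod N) ^ m = 1) (hm : 0 < m)
    (r : ↥(orbitSet N q) → F) :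
    (Finset.univ.filter fun j : ZMod N => r (orbitOf N q j) ≠ 0).card = wdeg r := by
  letI : Fintype ↥(orbitSet N q) := Fintype.ofFinite _
  rw [wdeg, finsum_eq_sum_of_fintype]
  rw [Finset.card_eq_sum_card_fiberwise
    (f := orbitOf N q) (t := Finset.univ) (fun x _ => Finset.mem_univ _)]
  refine Finset.sum_congr rfl fun l _ => ?_
  by_cases hl : r l ≠ 0
  · rw [if_pos hl]
    have hset : ((Finset.univ.filter fun j : ZMod N => r (orbitOf N q j) ≠ 0).filter
        fun j => orbitOf N q j = l) = (Set.toFinite (l : Set (ZMod N))).toFinset := by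
      ext j
      simp only [Finset.mem_filter, Finset.mem_univ, true_and, Set.Finite.mem_toFinset]
      constructor
      · rintro ⟨-, rfl⟩; exact mem_qOrbit_self N q j
      · intro hj
        have he := orbitOf_eq_of_mem hqe hm hj
        exact ⟨he ▸ hl, he⟩
    rw [hset, Set.ncard_eq_toFinset_card _ (Set.toFinite _)]
  · rw [if_neg hl]
    rw [not_not] at hl
    rw [Finset.card_eq_zero, Finset.filter_eq_empty_iff]
    rintro j hj rfl
    exact (Finset.mem_filter.mp hj).2 hl

lemma coprime_of_monic_irred {p₁ p₂ : Polynomial F} (hp : p₁.Monic) (hq : p₂.Monic)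
    (hpi : Irreducible p₁) (hqi : Irreducible p₂) (hne : p₁ ≠ p₂) : IsCoprime p₁ p₂ := by
  refine isCoprime_of_irreducible_dvd (fun h => hpi.ne_zero h.1) fun z hz hzp hzq => ?_
  exact hne (Polynomial.eq_of_monic_of_associated hp hq
    ((hz.associated_of_dvd hpi hzp).symm.trans (hz.associated_of_dvd hqi hzq)))

def Aset (F E : Type*) [Field F] [Field E] [Algebra F E] (N q : ℕ) (β : E) (t : ℕ)
    (r : ↥(orbitSet N q) → F) : Set (Polynomial F) :=
  {g | g.Monic ∧ Irreducible g ∧ g.natDegree = t ∧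
    (∀ x : E, Polynomial.aeval x g ≠ 0) ∧
    ∃ ginv : Polynomial F, ginv.degree < (N : WithBot ℕ) ∧
      ((X : Polynomial F) ^ N - 1 ∣ g * ginv - 1) ∧ r ∈ codeSet F E N q β ginv t}

lemma Aset_bound {N q m d t : ℕ} [NeZero N] [Fintype F]
    (hqe : (q : ZMod N) ^ m = 1) (hm : 0 < m) (β : E) (hβN : β ^ N = 1)
    (hbinj : Function.Injective (fun j : ZMod N => bpow β j))
    (hd : 0 < d) (ht : 0 < t) (r : ↥(orbitSet N q) → F) (hr : wdeg r = d) :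
    (Aset F E N q β t r).Finite ∧ (Aset F E N q β t r).ncard ≤ (d - 1) / t := by
  have hfin : (Aset F E N q β t r).Finite :=
    Set.Finite.subset (finite_monic_deg t) (fun g hg => le_of_eq hg.2.2.1)
  refine ⟨hfin, ?_⟩
  set Sfin : Finset (ZMod N) :=
    Finset.univ.filter (fun j : ZMod N => r (orbitOf N q j) ≠ 0) with hSfin
  have hcard : Sfin.card = d := by rw [hSfin, card_support_eq hqe hm r, hr]
  set Cr : Polynomial E := ∑ j ∈ Sfin,
    Polynomial.C (algebraMap F E (r (orbitOf N q j))) *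
      ∏ k ∈ Sfin.erase j, ((X : Polynomial E) - Polynomial.C (bpow β k)) with hCr
  have hCdeg : Cr.natDegree ≤ d - 1 := by
    rw [hCr]
    refine le_trans (Cr_natDegree_le Sfin (fun k => bpow β k) _) (by rw [hcard])
  obtain ⟨j0, hj0⟩ : Sfin.Nonempty := Finset.card_pos.mp (by omega)
  have hCne : Cr ≠ 0 := by
    rw [hCr]
    refine Cr_ne_zero Sfin (fun k => bpow β k) _ (fun x _ y _ h => hbinj h) hj0 ?_
    have := (Finset.mem_filter.mp hj0).2
    simpa using this
  -- every g in Aset divides Cr after mapping to E[X]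
  have hdvdCr : ∀ g ∈ hfin.toFinset, g.map (algebraMap F E) ∣ Cr := by
    intro g hg
    rw [Set.Finite.mem_toFinset] at hg
    obtain ⟨hmo, hirr, hdeg, hnr, ginv, hginv, hdvd, hcode⟩ := hg
    refine key_dvd Sfin (fun j => bpow β j) (fun j => r (orbitOf N q j))
      (fun j => Polynomial.aeval (bpow β j) ginv) g t hdeg
      (fun j _ => eval_ginv_one hβN hdvd j) ?_
    intro i hi
    have hs := syndrome_sum hqe hm β ginv r hcode hi
    rw [← hs]
    refine Finset.sum_subset (Finset.filter_subset _ _) fun j _ hj => ?_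
    have : r (orbitOf N q j) = 0 := by
      by_contra h
      exact hj (Finset.mem_filter.mpr ⟨Finset.mem_univ _, h⟩)
    simp [this]
  have hpair : (↑hfin.toFinset : Set (Polynomial F)).Pairwise
      (Function.onFun IsCoprime fun g => g.map (algebraMap F E)) := by
    intro g1 h1 g2 h2 hne
    rw [Set.Finite.coe_toFinset] at h1 h2
    exact (coprime_of_monic_irred h1.1 h2.1 h1.2.1 h2.2.1 hne).map (Polynomial.mapRingHom (algebraMap F E))
  have hproddvd : (∏ g ∈ hfin.toFinset, g.map (algebraMap F E)) ∣ Cr :=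
    Finset.prod_dvd_of_coprime hpair hdvdCr
  have hprodddeg : (∏ g ∈ hfin.toFinset, g.map (algebraMap F E)).natDegree =
      hfin.toFinset.card * t := by
    rw [Polynomial.natDegree_prod_of_monic _ _ (fun g hg => ?_)]
    · rw [Finset.sum_congr rfl (fun g hg => ?_), Finset.sum_const, smul_eq_mul]
      rw [Set.Finite.mem_toFinset] at hg
      rw [Polynomial.Monic.natDegree_map hg.1, hg.2.2.1]
    · rw [Set.Finite.mem_toFinset] at hg
      exact hg.1.map _
  have hfinal : hfin.toFinset.card * t ≤ d - 1 := by
    rw [← hprodddeg]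
    exact le_trans (Polynomial.natDegree_le_of_dvd hproddvd hCne) hCdeg
  rw [Set.ncard_eq_toFinset_card _ hfin]
  exact (Nat.le_div_iff_mul_le ht).mpr hfinal

end AuxProof

/-- `|G_{d,t,L}| ≤ ⌊(d−1)/t⌋ · |B_{d,L}|`. -/
theorem card_Gset_le (q m : ℕ) (hm : 0 < m) (hqm : Nat.Coprime q m)
    (F E : Type*) [Field F] [Field E] [Fintype F] [Fintype E] [Algebra F E]
    (hF : Fintype.card F = q) (hE : Fintype.card E = q ^ m)
    (β : E) (hβ : orderOf β = q ^ m - 1) (d t : ℕ) (hd : 0 < d) (ht : 0 < t) :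
    (Gset F E (q ^ m - 1) q β d t).ncard ≤
      ((d - 1) / t) * (Bset F (q ^ m - 1) q d).ncard := by
  set N := q ^ m - 1 with hN
  have hq2 : 2 ≤ q := by
    have := Fintype.one_lt_card (α := F)
    omega
  have hqm2 : 2 ≤ q ^ m := le_trans hq2 (Nat.le_self_pow hm.ne' q)
  haveI : NeZero N := ⟨by omega⟩
  have hqmN : q ^ m = N + 1 := by omega
  have hqe : (q : ZMod N) ^ m = 1 := by
    rw [← Nat.cast_pow, hqmN]
    push_cast [ZMod.natCast_self]
    simp
  have hβN : β ^ N = 1 := by rw [← hβ]; exact pow_orderOf_eq_one β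
  have hbinj : Function.Injective (fun j : ZMod N => bpow β j) := by
    intro j k h
    refine ZMod.val_injective N (pow_injOn_Iio_orderOf ?_ ?_ h)
    · rw [hβ]; exact ZMod.val_lt j
    · rw [hβ]; exact ZMod.val_lt k
  letI : Fintype ↥(orbitSet N q) := Fintype.ofFinite _
  have hBfin : (Bset F N q d).Finite := Set.toFinite _
  have hGfin : (Gset F E N q β d t).Finite :=
    Set.Finite.subset (finite_monic_deg t) (fun g hg => le_of_eq hg.2.2.1)
  have hAfin : ∀ r : ↥(orbitSet N q) → F, (Aset F E N q β t r).Finite :=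
    fun r => Set.Finite.subset (finite_monic_deg t) (fun g hg => le_of_eq hg.2.2.1)
  classical
  have hsub : hGfin.toFinset ⊆
      hBfin.toFinset.biUnion (fun r => (hAfin r).toFinset) := by
    intro g hg
    rw [Set.Finite.mem_toFinset] at hg
    obtain ⟨hmo, hirr, hdeg, hnr, ginv, h1, h2, r, hrB, hrc⟩ := hg
    exact Finset.mem_biUnion.mpr ⟨r, (Set.Finite.mem_toFinset _).mpr hrB,
      (Set.Finite.mem_toFinset _).mpr ⟨hmo, hirr, hdeg, hnr, ginv, h1, h2, hrc⟩⟩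
  calc (Gset F E N q β d t).ncard = hGfin.toFinset.card :=
        Set.ncard_eq_toFinset_card _ hGfin
    _ ≤ (hBfin.toFinset.biUnion (fun r => (hAfin r).toFinset)).card :=
        Finset.card_le_card hsub
    _ ≤ ∑ r ∈ hBfin.toFinset, (hAfin r).toFinset.card := Finset.card_biUnion_le
    _ ≤ ∑ _r ∈ hBfin.toFinset, (d - 1) / t := by
        refine Finset.sum_le_sum fun r hr => ?_
        have hrB : r ∈ Bset F N q d := (Set.Finite.mem_toFinset hBfin).mp hr
        have hb := (Aset_bound hqe hm β hβN hbinj hd ht r hrB).2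
        rwa [Set.ncard_eq_toFinset_card _ (hAfin r)] at hb
    _ = hBfin.toFinset.card * ((d - 1) / t) := by
        rw [Finset.sum_const, smul_eq_mul]
    _ = ((d - 1) / t) * (Bset F N q d).ncard := by
        rw [Set.ncard_eq_toFinset_card _ hBfin, mul_comm]
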